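/- Let s ∈ ℕ and let L₁, …, L_s be linear subspaces of ℝᵈ with L₁ + ⋯ + L_s = ℝᵈ. For each i let L_i^Δ denote the sum of all the subspaces L₁, …, L_s except L_i. Fix a ∈ ℝᵈ, and for each i let K_i ⊆ a + L_i be a convex cone with vertex a. Define N_i := convexHull( K_i ∪ (a + L_i^Δ) ) for each i. Then each N_i is a convex cone with vertex a, and the family {N₁, …, N_s} is not separable in ℝᵈ. -/

import Mathlib

open scoped RealInnerProductSpace
open Asymptotics Topology

noncomputable section

abbrev Euc (d : ℕ) : Type := EuclideanSpace ℝ (Fin d)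

/-- `K` is a convex cone with vertex `a`. -/
def IsConvexCone {E : Type*} [NormedAddCommGroup E] [InnerProductSpace ℝ E]
    (a : E) (K : Set E) : Prop :=
  a ∈ K ∧ (∀ x ∈ K, ∀ α : ℝ, 0 ≤ α → a + α • (x - a) ∈ K) ∧ Convex ℝ K

/-- The polar (dual) cone of a cone `K` with vertex `a`. -/
def polarCone {E : Type*} [NormedAddCommGroup E] [InnerProductSpace ℝ E]
    (a : E) (K : Set E) : Set E :=
  {y | ∀ x ∈ K, ⟪y, x - a⟫ ≤ 0}

/-- `Q` is a tent of `Ω` at `a`. -/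
def IsTent {E : Type*} [NormedAddCommGroup E] [InnerProductSpace ℝ E]
    (Ω : Set E) (a : E) (Q : Set E) : Prop :=
  IsConvexCone a Q ∧
  ∃ ψ : E → E, (fun x => ψ x - x) =o[𝓝 a] (fun x => x - a) ∧
    ∃ ε : ℝ, 0 < ε ∧ ∀ x ∈ Q, ‖x - a‖ < ε → ψ x ∈ Ω

/-- `Q` is a local tent of `Ω` at `a`. -/
def IsLocalTent {E : Type*} [NormedAddCommGroup E] [InnerProductSpace ℝ E]
    (Ω : Set E) (a : E) (Q : Set E) : Prop :=
  IsConvexCone a Q ∧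
  ∀ x ∈ intrinsicInterior ℝ Q, ∃ Q' : Set E, Q' ⊆ Q ∧ IsTent Ω a Q' ∧
    x ∈ intrinsicInterior ℝ Q' ∧ affineSpan ℝ Q' = affineSpan ℝ Q

/-- A family of convex cones with common vertex `a` is separable. -/
def SeparableFam {E : Type*} [NormedAddCommGroup E] [InnerProductSpace ℝ E]
    {ι : Type*} (a : E) (K : ι → Set E) : Prop :=
  ∃ (i : ι) (c : E), c ≠ 0 ∧ (∀ x ∈ K i, ⟪c, x - a⟫ ≤ 0) ∧
    ∀ x : E, (∀ j, j ≠ i → x ∈ K j) → 0 ≤ ⟪c, x - a⟫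

/-- If `L₁ + ⋯ + L_s = ℝᵈ`, `Kᵢ ⊆ a + Lᵢ` are convex cones with vertex `a`,
and `Nᵢ` is the convex hull of `Kᵢ ∪ (a + Lᵢ^Δ)` where `Lᵢ^Δ` is the sum of
all the subspaces except `Lᵢ`, then each `Nᵢ` is a convex cone with vertex `a`
and the family `{N₁, …, N_s}` is not separable. -/
theorem stmt13 (d s : ℕ) (hs : 0 < s) (a : Euc d)
    (L : Fin s → Submodule ℝ (Euc d)) (hL : (⨆ i, L i) = ⊤)
    (K : Fin s → Set (Euc d)) (hK : ∀ i, IsConvexCone a (K i))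
    (hKL : ∀ i, K i ⊆ (fun v => a + v) '' (L i : Set (Euc d)))
    (N : Fin s → Set (Euc d))
    (hN : ∀ i, N i = convexHull ℝ
      (K i ∪ (fun v => a + v) ''
        ((⨆ j, ⨆ (_ : j ≠ i), L j : Submodule ℝ (Euc d)) : Set (Euc d)))) :
    (∀ i, IsConvexCone a (N i)) ∧ ¬ SeparableFam a N := by
  -- abbreviation for the generating set
  set S : Fin s → Set (Euc d) := fun i =>
    K i ∪ (fun v => a + v) ''
      ((⨆ j, ⨆ (_ : j ≠ i), L j : Submodule ℝ (Euc d)) : Set (Euc d)) with hS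
  have hNS : ∀ i, N i = convexHull ℝ (S i) := hN
  have haN : ∀ i, a ∈ N i := fun i => by
    rw [hNS i]; exact subset_convexHull ℝ _ (Or.inl (hK i).1)
  constructor
  · intro i
    refine ⟨haN i, ?_, by rw [hNS i]; exact convex_convexHull ℝ _⟩
    intro x hx α hα
    rw [hNS i] at hx ⊢
    have hmap : AffineMap.homothety a α '' S i ⊆ S i := by
      rintro _ ⟨y, hy, rfl⟩
      rw [AffineMap.homothety_apply]
      rcases hy with hy | ⟨v, hv, rfl⟩
      · have := (hK i).2.1 y hy α hα
        refine Or.inl ?_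
        simpa [add_comm] using this
      · refine Or.inr ⟨α • v, Submodule.smul_mem _ _ hv, ?_⟩
        simp [add_comm]
    have hx' : AffineMap.homothety a α x ∈ convexHull ℝ (S i) := by
      have : AffineMap.homothety a α x ∈
          AffineMap.homothety a α '' convexHull ℝ (S i) := ⟨x, hx, rfl⟩
      rw [AffineMap.image_convexHull] at this
      exact convexHull_mono hmap this
    have : a + α • (x - a) = AffineMap.homothety a α x := by
      rw [AffineMap.homothety_apply]; exact add_comm _ _
    rwa [this]
  · rintro ⟨i, c, hc, h1, h2⟩
    have hperp : ∀ j, ∀ v ∈ L j, ⟪c, v⟫ = 0 := by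
      intro j v hv
      by_cases hj : j = i
      · subst hj
        have key : ∀ w, w ∈ L j → 0 ≤ ⟪c, w⟫ := by
          intro w hw
          have hmem : ∀ k, k ≠ j → a + w ∈ N k := by
            intro k hk
            rw [hNS k]
            refine subset_convexHull ℝ _ (Or.inr ⟨w, ?_, rfl⟩)
            exact (le_iSup₂ (f := fun m (_ : m ≠ k) => L m) j
              (fun h => hk h.symm)) hw
          have := h2 (a + w) hmem
          simpa using this
        have h1' := key v hv
        have h2' := key (-v) (Submodule.neg_mem _ hv)
        rw [inner_neg_right] at h2'
        linarith
      · have key : ∀ w, w ∈ L j → ⟪c, w⟫ ≤ 0 := by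
          intro w hw
          have hmem : a + w ∈ N i := by
            rw [hNS i]
            refine subset_convexHull ℝ _ (Or.inr ⟨w, ?_, rfl⟩)
            exact (le_iSup₂ (f := fun m (_ : m ≠ i) => L m) j hj) hw
          have := h1 (a + w) hmem
          simpa using this
        have h1' := key v hv
        have h2' := key (-v) (Submodule.neg_mem _ hv)
        rw [inner_neg_right] at h2'
        linarith
    have hker : (⊤ : Submodule ℝ (Euc d)) ≤ LinearMap.ker ((innerSL ℝ c : Euc d →L[ℝ] ℝ) : Euc d →ₗ[ℝ] ℝ) := by
      rw [← hL]
      refine iSup_le fun j v hv => ?_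
      simpa [LinearMap.mem_ker] using hperp j v hv
    have : ⟪c, c⟫ = 0 := by
      have := hker (Submodule.mem_top (x := c))
      simpa [LinearMap.mem_ker] using this
    exact hc (inner_self_eq_zero.mp this)
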